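/- Let α be a type and F = FreeGroup α. Let h = (z, f) ∈ ℤ × F with f ≠ 1. Then the centralizer of h in ℤ × F is commutative: any two elements of ℤ × F that each commute with h commute with each other. -/

import Mathlib

open FreeGroup List

private lemma list_cons_eq_append {β : Type*} :
    ∀ (l : List β) (a : β), a :: l = l ++ [a] → l = List.replicate l.length a := by
  intro l
  induction l with
  | nil => intro a _; rfl
  | cons b t ih =>
    intro a h
    simp only [List.cons_append, List.cons.injEq] at h
    obtain ⟨rfl, h2⟩ := h
    have := ih a h2
    simp [List.replicate_succ, ← this]

private lemma invRev_append_single {β : Type*} (l : List (β × Bool)) (x : β × Bool) :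
    FreeGroup.invRev (l ++ [x]) = (x.1, !x.2) :: FreeGroup.invRev l := by
  simp [FreeGroup.invRev]

private lemma invRev_cons' {β : Type*} (l : List (β × Bool)) (x : β × Bool) :
    FreeGroup.invRev (x :: l) = FreeGroup.invRev l ++ [(x.1, !x.2)] := by
  simp [FreeGroup.invRev]

private lemma reduce_append_single {β : Type*} [DecidableEq β] (l : List (β × Bool))
    (x : β × Bool) :
    FreeGroup.reduce (l ++ [x]) =
      FreeGroup.invRev (FreeGroup.reduce ((x.1, !x.2) :: FreeGroup.invRev l)) := by
  rw [← invRev_append_single, FreeGroup.reduce_invRev, FreeGroup.invRev_invRev]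

private lemma replicate_of_reduce_eq {β : Type*} [DecidableEq β]
    (l : List (β × Bool)) (x : β × Bool) (hl : FreeGroup.reduce l = l)
    (h : FreeGroup.reduce (x :: l) = FreeGroup.reduce (l ++ [x])) :
    l = List.replicate l.length x ∨ l = List.replicate l.length (x.1, !x.2) := by
  rcases l with _ | ⟨hd, tl⟩
  · left; rfl
  have hl' : FreeGroup.reduce (FreeGroup.invRev (hd :: tl)) = FreeGroup.invRev (hd :: tl) := by
    rw [FreeGroup.reduce_invRev, hl]
  rcases hinv : FreeGroup.invRev (hd :: tl) with _ | ⟨hd', tl'⟩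
  · exfalso
    have := congrArg List.length hinv
    simp [FreeGroup.invRev_length] at this
  have hA : FreeGroup.reduce (x :: hd :: tl) =
      if x.1 = hd.1 ∧ x.2 = !hd.2 then tl else x :: hd :: tl := by
    rw [FreeGroup.reduce.cons, hl]
  have hB : FreeGroup.reduce ((x.1, !x.2) :: FreeGroup.invRev (hd :: tl)) =
      if x.1 = hd'.1 ∧ (!x.2) = (!hd'.2) then tl' else (x.1, !x.2) :: hd' :: tl' := by
    rw [hinv] at hl' ⊢
    rw [FreeGroup.reduce.cons, hl']
  rw [reduce_append_single, hA, hB] at h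
  have hlen : tl'.length = tl.length := by
    have := congrArg List.length hinv
    simp [FreeGroup.invRev_length] at this
    omega
  by_cases c1 : x.1 = hd.1 ∧ x.2 = !hd.2 <;> by_cases c2 : x.1 = hd'.1 ∧ (!x.2) = (!hd'.2)
  · -- both cancel
    rw [if_pos c1, if_pos c2] at h
    right
    have hhd : hd = (x.1, !x.2) := Prod.ext c1.1.symm (by simp [c1.2])
    have hhd' : hd' = x := Prod.ext c2.1.symm (Bool.not_inj c2.2).symm
    have h3 := congrArg FreeGroup.invRev hinv
    rw [FreeGroup.invRev_invRev, invRev_cons'] at h3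
    rw [hhd', ← h] at h3
    -- h3 : hd :: tl = tl ++ [(x.1, !x.2)]
    rw [← hhd] at h3
    have hrep := list_cons_eq_append tl hd h3
    rw [← hhd]
    rw [hrep]
    simp [List.replicate_succ]
  · rw [if_pos c1, if_neg c2] at h
    have := congrArg List.length h
    rw [FreeGroup.invRev_length] at this
    simp [hlen] at this
    omega
  · rw [if_neg c1, if_pos c2] at h
    have := congrArg List.length h
    rw [FreeGroup.invRev_length] at this
    simp [hlen] at this
    omega
  · -- neither cancels
    rw [if_neg c1, if_neg c2] at h
    left
    rw [invRev_cons'] at h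
    have hxx : ((x.1 : β), !(!x.2)) = x := by simp
    rw [hxx] at h
    rw [← hinv, FreeGroup.invRev_invRev] at h
    exact list_cons_eq_append _ x h

private lemma toWord_replicate_of_commute {β : Type*} [DecidableEq β]
    (w : FreeGroup β) (j : β) (h : Commute w (FreeGroup.of j)) :
    ∃ b, w.toWord = List.replicate w.toWord.length (j, b) := by
  have hl : FreeGroup.reduce w.toWord = w.toWord := FreeGroup.reduce_toWord w
  have key : FreeGroup.mk ((j, true) :: w.toWord) = FreeGroup.mk (w.toWord ++ [(j, true)]) := by
    show FreeGroup.mk ([(j, true)] ++ w.toWord) = _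
    rw [← FreeGroup.mul_mk, ← FreeGroup.mul_mk]
    have h1 : FreeGroup.mk [(j, true)] = FreeGroup.of j := rfl
    rw [h1, FreeGroup.mk_toWord]
    exact h.symm
  have h2 := FreeGroup.reduce.sound key
  rcases replicate_of_reduce_eq w.toWord (j, true) hl h2 with h1 | h1
  · exact ⟨true, h1⟩
  · exact ⟨false, h1⟩

private lemma commute_of_subsingleton {β : Type*} (hsub : ∀ i k : β, i = k)
    (a b : FreeGroup β) : Commute a b := by
  induction a using FreeGroup.induction_on with
  | C1 => exact Commute.one_left b
  | of x =>
    induction b using FreeGroup.induction_on with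
    | C1 => exact Commute.one_right _
    | of y => rw [hsub x y]
    | inv_of y hy => exact hy.inv_right
    | mul u v hu hv => exact hu.mul_right hv
  | inv_of x hx => exact hx.inv_left
  | mul u v hu hv => exact hu.mul_left hv

private lemma freeGroup_comm_of_center {β : Type*} (w : FreeGroup β) (hw : w ≠ 1)
    (hc : ∀ g : FreeGroup β, Commute g w) (a b : FreeGroup β) : Commute a b := by
  classical
  by_cases hsub : ∀ i k : β, i = k
  · exact commute_of_subsingleton hsub a b
  · exfalso
    push_neg at hsub
    obtain ⟨i, k, hik⟩ := hsub
    obtain ⟨b1, h1⟩ := toWord_replicate_of_commute w i ((hc (FreeGroup.of i)).symm)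
    obtain ⟨b2, h2⟩ := toWord_replicate_of_commute w k ((hc (FreeGroup.of k)).symm)
    have hne : w.toWord ≠ [] := fun hcon => hw (FreeGroup.toWord_eq_nil_iff.mp hcon)
    rcases hlw : w.toWord with _ | ⟨hd, tl⟩
    · exact hne hlw
    rw [hlw] at h1 h2
    simp only [List.length_cons, List.replicate_succ, List.cons.injEq] at h1 h2
    exact hik (congrArg Prod.fst (h1.1.symm.trans h2.1))

private lemma commute_in_free_group {β : Type*} (f : FreeGroup β) (hf : f ≠ 1)
    (a b : FreeGroup β) (ha : Commute a f) (hb : Commute b f) : Commute a b := by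
  classical
  set C := Subgroup.centralizer ({f} : Set (FreeGroup β)) with hC
  have hmem : ∀ {c : FreeGroup β}, Commute c f → c ∈ C := by
    intro c hcf
    rw [hC, Subgroup.mem_centralizer_iff]
    rintro g hg
    rw [Set.mem_singleton_iff] at hg
    subst hg
    exact hcf.symm
  have hfC : f ∈ C := hmem (Commute.refl f)
  let e := IsFreeGroup.toFreeGroup (G := C)
  have hwne : e ⟨f, hfC⟩ ≠ 1 := by
    intro hcon
    apply hf
    have h1 : (⟨f, hfC⟩ : C) = 1 := by
      apply e.injective
      rw [hcon, _root_.map_one]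
    exact congrArg Subtype.val h1
  have hcent : ∀ g : FreeGroup (IsFreeGroup.Generators C), Commute g (e ⟨f, hfC⟩) := by
    intro g
    obtain ⟨c, rfl⟩ := e.surjective g
    have h2 : Commute c ⟨f, hfC⟩ := by
      have h3 := Subgroup.mem_centralizer_iff.mp c.2 f rfl
      exact Subtype.ext (by simpa using h3.symm)
    exact h2.map e.toMonoidHom
  have key : Commute (e ⟨a, hmem ha⟩) (e ⟨b, hmem hb⟩) :=
    freeGroup_comm_of_center _ hwne hcent _ _
  have h4 : (⟨a, hmem ha⟩ : C) * ⟨b, hmem hb⟩ = ⟨b, hmem hb⟩ * ⟨a, hmem ha⟩ :=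
    e.injective (by rw [_root_.map_mul, _root_.map_mul]; exact key)
  have h6 := congrArg Subtype.val h4
  exact (by simpa using h6 : a * b = b * a)

/-- Let `F = FreeGroup α` and `h = (z, f) ∈ ℤ × F` with `f ≠ 1`. Then the
centralizer of `h` in `ℤ × F` is commutative: any two elements of `ℤ × F`
that each commute with `h` commute with each other. -/
theorem centralizer_commutative_of_snd_ne_one {α : Type*} (z : ℤ) (f : FreeGroup α)
    (hf : f ≠ 1) (x y : Multiplicative ℤ × FreeGroup α)
    (hx : Commute x (Multiplicative.ofAdd z, f))
    (hy : Commute y (Multiplicative.ofAdd z, f)) :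
    Commute x y := by
  have hx2 : Commute x.2 f := congrArg Prod.snd hx
  have hy2 : Commute y.2 f := congrArg Prod.snd hy
  have h2 := commute_in_free_group f hf x.2 y.2 hx2 hy2
  exact Prod.ext (mul_comm _ _) h2
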